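/- Let M, N ≥ 2, let A be a Hermitian (MN)×(MN) complex matrix, let λ₀ ≤ λ₁ ≤ … ≤ λ_{MN−1} be its eigenvalues listed in nondecreasing order, and let (v₀, …, v_{MN−1}) be a corresponding orthonormal basis of eigenvectors, A v_i = λ_i v_i. Then A is a left entanglement witness if and only if there exists k ∈ {0, 1, …, MN−2} such that the linear span of {v₀, …, v_k} contains no nonzero vector of the form x ⊗ y (Kronecker product, x ∈ ℂ^M, y ∈ ℂ^N) and λ_{k+1} > λ_k. -/

import Mathlib

open Matrix
open scoped Kronecker ComplexOrder

set_option maxHeartbeats 1600000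
noncomputable section

/-- `x` is a unit vector in `ℂ^d`. -/
def isUnitVec {d : ℕ} (x : Fin d → ℂ) : Prop := ∑ i, ‖x i‖ ^ 2 = 1

/-- The rank-one projector `x xᴴ`. -/
def outer {d : ℕ} (x : Fin d → ℂ) : Matrix (Fin d) (Fin d) ℂ :=
  Matrix.vecMulVec x (star x)

/-- The set of pure product states `(x xᴴ) ⊗ (y yᴴ)` for unit vectors `x, y`. -/
def pureProduct (M N : ℕ) : Set (Matrix (Fin M × Fin N) (Fin M × Fin N) ℂ) :=
  {σ | ∃ x : Fin M → ℂ, ∃ y : Fin N → ℂ,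
    isUnitVec x ∧ isUnitVec y ∧ σ = outer x ⊗ₖ outer y}

/-- The set of separable states: the convex hull (over ℝ) of the pure product states. -/
def SepStates (M N : ℕ) : Set (Matrix (Fin M × Fin N) (Fin M × Fin N) ℂ) :=
  convexHull ℝ (pureProduct M N)

/-- `ρ` is a density matrix: positive semidefinite with unit trace. -/
def IsDensity {d : Type*} [Fintype d] (ρ : Matrix d d ℂ) : Prop :=
  ρ.PosSemidef ∧ ρ.trace = 1

/-- `A` is a left entanglement witness: for some `a ∈ ℝ`, `tr(Aσ) ≥ a` for all separable
`σ`, while `tr(Aρ) < a` for some density matrix `ρ`. -/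
def IsLeftEW (M N : ℕ) (A : Matrix (Fin M × Fin N) (Fin M × Fin N) ℂ) : Prop :=
  ∃ a : ℝ, (∀ σ ∈ SepStates M N, a ≤ ((A * σ).trace).re) ∧
    ∃ ρ : Matrix (Fin M × Fin N) (Fin M × Fin N) ℂ, IsDensity ρ ∧ ((A * ρ).trace).re < a

/-- `z ∈ ℂ^M ⊗ ℂ^N` is a product vector `x ⊗ y`. -/
def IsProdVec (M N : ℕ) (z : Fin M × Fin N → ℂ) : Prop :=
  ∃ x : Fin M → ℂ, ∃ y : Fin N → ℂ, z = fun ij => x ij.1 * y ij.2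

/-! ### Auxiliary lemmas -/

lemma EW.dot_star_comm {ι : Type*} [Fintype ι] (u x : ι → ℂ) :
    star x ⬝ᵥ u = star (star u ⬝ᵥ x) := by
  simp only [dotProduct, star_sum, Pi.star_apply, star_mul', star_star]
  exact Finset.sum_congr rfl fun i _ => mul_comm _ _

lemma EW.dotProduct_finsum {ι κ : Type*} [Fintype ι] [Fintype κ] (u : ι → ℂ) (f : κ → ι → ℂ) :
    u ⬝ᵥ (∑ j, f j) = ∑ j, u ⬝ᵥ f j := by
  simp only [dotProduct, Finset.sum_apply, Finset.mul_sum]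
  rw [Finset.sum_comm]

lemma EW.smul_vecMulVec {ι : Type*} (t : ℂ) (u w : ι → ℂ) :
    Matrix.vecMulVec (t • u) w = t • Matrix.vecMulVec u w := by
  ext p q
  simp only [Matrix.vecMulVec_apply, Pi.smul_apply, Matrix.smul_apply, smul_eq_mul]
  ring

lemma EW.mul_vecMulVec {ι : Type*} [Fintype ι] (A : Matrix ι ι ℂ) (u w : ι → ℂ) :
    A * Matrix.vecMulVec u w = Matrix.vecMulVec (A.mulVec u) w := by
  ext p q
  simp only [Matrix.mul_apply, Matrix.vecMulVec_apply, Matrix.mulVec, dotProduct,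
    Finset.sum_mul]
  exact Finset.sum_congr rfl fun r _ => by ring

lemma EW.trace_mul_vecMulVec {ι : Type*} [Fintype ι] (A : Matrix ι ι ℂ) (u : ι → ℂ) :
    (A * Matrix.vecMulVec u (star u)).trace = star u ⬝ᵥ A.mulVec u := by
  simp only [Matrix.trace, Matrix.diag, Matrix.mul_apply, Matrix.vecMulVec_apply,
    dotProduct, Matrix.mulVec, Pi.star_apply, Finset.mul_sum]
  exact Finset.sum_congr rfl fun p _ => Finset.sum_congr rfl fun q _ => by ring

lemma EW.vecMulVec_mulVec {ι : Type*} [Fintype ι] (u w x : ι → ℂ) :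
    (Matrix.vecMulVec u w).mulVec x = (w ⬝ᵥ x) • u := by
  ext p
  simp only [Matrix.mulVec, dotProduct, Matrix.vecMulVec_apply, Pi.smul_apply, smul_eq_mul,
    Finset.sum_mul]
  exact Finset.sum_congr rfl fun r _ => by ring

lemma EW.vecMulVec_posSemidef {ι : Type*} [Fintype ι] (u : ι → ℂ) :
    (Matrix.vecMulVec u (star u)).PosSemidef := by
  refine Matrix.posSemidef_iff_dotProduct_mulVec.mpr ⟨?_, ?_⟩
  · ext p q
    simp only [Matrix.conjTranspose_apply, Matrix.vecMulVec_apply, Pi.star_apply, star_mul',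
      star_star]
    exact mul_comm _ _
  · intro x
    rw [EW.vecMulVec_mulVec, dotProduct_smul, smul_eq_mul, mul_comm, EW.dot_star_comm u x]
    exact star_mul_self_nonneg ((star u ⬝ᵥ x : ℂ))

lemma EW.outer_kron {M N : ℕ} (x : Fin M → ℂ) (y : Fin N → ℂ) :
    outer x ⊗ₖ outer y =
      Matrix.vecMulVec (fun ij : Fin M × Fin N => x ij.1 * y ij.2)
        (star fun ij : Fin M × Fin N => x ij.1 * y ij.2) := by
  ext ⟨i1, i2⟩ ⟨j1, j2⟩
  simp only [Matrix.kroneckerMap_apply, outer, Matrix.vecMulVec_apply, Pi.star_apply,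
    star_mul']
  ring

lemma EW.completeness {M N : ℕ} (v : Fin (M * N) → (Fin M × Fin N → ℂ))
    (horth : ∀ i j, star (v i) ⬝ᵥ v j = if i = j then 1 else 0) :
    ∀ p q, (∑ i, v i p * star (v i q)) = if p = q then 1 else 0 := by
  set U : Matrix (Fin (M * N)) (Fin M × Fin N) ℂ := Matrix.of fun i p => v i p with hU
  have hUU : U * U.conjTranspose = 1 := by
    ext i j
    simp only [Matrix.mul_apply, Matrix.conjTranspose_apply, Matrix.one_apply, hU,
      Matrix.of_apply]
    have h := horth j i
    simp only [dotProduct, Pi.star_apply] at h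
    rw [show (∑ p, v i p * star (v j p)) = ∑ p, star (v j p) * v i p from
      Finset.sum_congr rfl fun p _ => mul_comm _ _, h]
    simp [eq_comm]
  have h2 : U.conjTranspose * U = 1 :=
    (Matrix.mul_eq_one_comm_of_equiv finProdFinEquiv.symm).mp hUU
  intro p q
  have h3 : (U.conjTranspose * U) q p = (1 : Matrix (Fin M × Fin N) (Fin M × Fin N) ℂ) q p := by
    rw [h2]
  simp only [Matrix.mul_apply, Matrix.conjTranspose_apply, Matrix.one_apply, hU,
    Matrix.of_apply] at h3
  rw [show (∑ i, v i p * star (v i q)) = ∑ i, star (v i q) * v i p from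
    Finset.sum_congr rfl fun i _ => mul_comm _ _, h3]
  simp [eq_comm]

lemma EW.sep_lower {M N : ℕ} (A : Matrix (Fin M × Fin N) (Fin M × Fin N) ℂ) (a : ℝ)
    (h : ∀ σ ∈ pureProduct M N, a ≤ ((A * σ).trace).re) :
    ∀ σ ∈ SepStates M N, a ≤ ((A * σ).trace).re := by
  have hconv : Convex ℝ {σ : Matrix (Fin M × Fin N) (Fin M × Fin N) ℂ |
      a ≤ ((A * σ).trace).re} := by
    intro σ hσ τ hτ b cc hb hc hbc
    simp only [Set.mem_setOf_eq] at *
    have he : (A * (b • σ + cc • τ)).trace = b • (A * σ).trace + cc • (A * τ).trace := by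
      rw [Matrix.mul_add, Matrix.mul_smul, Matrix.mul_smul, Matrix.trace_add,
        Matrix.trace_smul, Matrix.trace_smul]
    rw [he]
    simp only [Complex.add_re, Complex.real_smul, Complex.mul_re, Complex.ofReal_re,
      Complex.ofReal_im, zero_mul, sub_zero]
    have h1 := mul_le_mul_of_nonneg_left hσ hb
    have h2 := mul_le_mul_of_nonneg_left hτ hc
    have h3 : b * a + cc * a = a := by rw [← add_mul, hbc, one_mul]
    linarith
  exact fun σ hσ => convexHull_min h hconv hσ

lemma EW.unit_basis (d : ℕ) (hd : 0 < d) :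
    isUnitVec (fun i : Fin d => if i = ⟨0, hd⟩ then (1 : ℂ) else 0) := by
  show (∑ i : Fin d, ‖if i = ⟨0, hd⟩ then (1 : ℂ) else 0‖ ^ 2) = 1
  rw [Finset.sum_eq_single (⟨0, hd⟩ : Fin d)]
  · simp
  · intro b _ hb; simp [hb]
  · simp

lemma EW.isUnitVec_sphere_compact (d : ℕ) :
    IsCompact {x : Fin d → ℂ | isUnitVec x} := by
  apply Metric.isCompact_of_isClosed_isBounded
  · have hcont : Continuous (fun x : Fin d → ℂ => ∑ i, ‖x i‖ ^ 2) := by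
      apply continuous_finset_sum
      intro i _
      exact ((continuous_apply i).norm).pow 2
    exact isClosed_eq hcont continuous_const
  · rw [Metric.isBounded_iff_subset_closedBall 0]
    refine ⟨1, fun x hx => ?_⟩
    simp only [Metric.mem_closedBall, dist_zero_right]
    rw [pi_norm_le_iff_of_nonneg zero_le_one]
    intro i
    have h1 : ‖x i‖ ^ 2 ≤ 1 := by
      have hx' : ∑ j, ‖x j‖ ^ 2 = 1 := hx
      rw [← hx']
      exact Finset.single_le_sum (f := fun j => ‖x j‖ ^ 2) (fun j _ => by positivity)
        (Finset.mem_univ i)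
    nlinarith [norm_nonneg (x i)]

lemma EW.prod_unit_norm {M N : ℕ} (x : Fin M → ℂ) (y : Fin N → ℂ)
    (hx : isUnitVec x) (hy : isUnitVec y) :
    ∑ p : Fin M × Fin N, ‖x p.1 * y p.2‖ ^ 2 = 1 := by
  have hx' : ∑ i, ‖x i‖ ^ 2 = 1 := hx
  have hy' : ∑ j, ‖y j‖ ^ 2 = 1 := hy
  calc ∑ p : Fin M × Fin N, ‖x p.1 * y p.2‖ ^ 2
      = ∑ i : Fin M, ∑ j : Fin N, ‖x i‖ ^ 2 * ‖y j‖ ^ 2 := by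
        rw [Fintype.sum_prod_type]
        exact Finset.sum_congr rfl fun i _ => Finset.sum_congr rfl fun j _ => by
          rw [norm_mul, mul_pow]
    _ = (∑ i, ‖x i‖ ^ 2) * (∑ j, ‖y j‖ ^ 2) := (Fintype.sum_mul_sum _ _).symm
    _ = 1 := by rw [hx', hy', one_mul]

/-- Spectral characterisation of left entanglement witnesses: `A` is a left entanglement
witness iff for some `k ≤ MN - 2` the span of the eigenvectors corresponding to the `k+1`
smallest eigenvalues contains no nonzero product vector and `λ_{k+1} > λ_k`. -/
theorem isLeftEW_iff_spectral (M N : ℕ) (hM : 2 ≤ M) (hN : 2 ≤ N)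
    (A : Matrix (Fin M × Fin N) (Fin M × Fin N) ℂ) (hA : A.IsHermitian)
    (lam : Fin (M * N) → ℝ) (hmono : Monotone lam)
    (v : Fin (M * N) → (Fin M × Fin N → ℂ))
    (horth : ∀ i j, star (v i) ⬝ᵥ v j = if i = j then 1 else 0)
    (heig : ∀ i, A.mulVec (v i) = (lam i : ℂ) • v i) :
    IsLeftEW M N A ↔
      ∃ k : ℕ, ∃ hk : k + 1 < M * N,
        (∀ z ∈ Submodule.span ℂ (v '' {i : Fin (M * N) | (i : ℕ) ≤ k}),
            IsProdVec M N z → z = 0) ∧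
        lam ⟨k, by omega⟩ < lam ⟨k + 1, hk⟩ := by
  have hcomp := EW.completeness v horth
  have hn : 0 < M * N := by positivity
  -- the coefficient functional
  set c : (Fin M × Fin N → ℂ) → Fin (M * N) → ℂ := fun w i => star (v i) ⬝ᵥ w with hc
  -- expansion of any vector in the eigenbasis
  have hexp : ∀ w : Fin M × Fin N → ℂ, ∑ i, c w i • v i = w := by
    intro w; funext p
    simp only [Finset.sum_apply, Pi.smul_apply, smul_eq_mul, hc, dotProduct, Pi.star_apply,
      Finset.sum_mul]
    rw [Finset.sum_comm]
    have h1 : ∀ q, (∑ i, star (v i q) * w q * v i p) = (∑ i, v i p * star (v i q)) * w q := by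
      intro q; rw [Finset.sum_mul]; exact Finset.sum_congr rfl fun i _ => by ring
    simp_rw [h1, hcomp]
    simp [Finset.sum_ite_eq]
  -- A.mulVec in terms of coefficients
  have hAw : ∀ w : Fin M × Fin N → ℂ, A.mulVec w = ∑ i, c w i • ((lam i : ℂ) • v i) := by
    intro w
    conv_lhs => rw [← hexp w]
    rw [← Matrix.mulVecLin_apply, map_sum]
    simp_rw [_root_.map_smul, Matrix.mulVecLin_apply, heig]
  -- quadratic form identity
  have hquad : ∀ w : Fin M × Fin N → ℂ,
      star w ⬝ᵥ A.mulVec w = ((∑ i, lam i * Complex.normSq (c w i) : ℝ) : ℂ) := by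
    intro w
    rw [hAw w, EW.dotProduct_finsum]
    have h2 : ∀ i : Fin (M*N), star w ⬝ᵥ (c w i • ((lam i : ℂ) • v i)) =
        ((lam i * Complex.normSq (c w i) : ℝ) : ℂ) := by
      intro i
      rw [dotProduct_smul, dotProduct_smul, smul_eq_mul, smul_eq_mul,
        EW.dot_star_comm (v i) w]
      rw [show star (star (v i) ⬝ᵥ w) = (starRingEnd ℂ) (c w i) from rfl]
      push_cast
      rw [mul_comm (c w i), mul_assoc, ← Complex.normSq_eq_conj_mul_self]
    simp_rw [h2]
    norm_cast
  -- norm identity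
  have hnorm2 : ∀ w : Fin M × Fin N → ℂ,
      ∑ i, Complex.normSq (c w i) = ∑ p, ‖w p‖ ^ 2 := by
    intro w
    have h1 : star w ⬝ᵥ w = ((∑ i, Complex.normSq (c w i) : ℝ) : ℂ) := by
      rw [show (star w ⬝ᵥ w : ℂ) = star w ⬝ᵥ (∑ i, c w i • v i) from by rw [hexp w]]
      rw [EW.dotProduct_finsum]
      have h2 : ∀ i : Fin (M*N), star w ⬝ᵥ (c w i • v i) =
          ((Complex.normSq (c w i) : ℝ) : ℂ) := by
        intro i
        rw [dotProduct_smul, smul_eq_mul, EW.dot_star_comm (v i) w]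
        rw [show star (star (v i) ⬝ᵥ w) = (starRingEnd ℂ) (c w i) from rfl]
        exact Complex.mul_conj _
      simp_rw [h2]
      norm_cast
    have h3 : star w ⬝ᵥ w = ((∑ p, ‖w p‖ ^ 2 : ℝ) : ℂ) := by
      rw [Complex.ofReal_sum]
      simp only [dotProduct, Pi.star_apply]
      refine Finset.sum_congr rfl fun p _ => ?_
      rw [show (star (w p) : ℂ) = (starRingEnd ℂ) (w p) from rfl]
      rw [show ((‖w p‖ ^ 2 : ℝ) : ℂ) = ((Complex.normSq (w p) : ℝ) : ℂ) by
        rw [Complex.normSq_eq_norm_sq]]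
      rw [Complex.normSq_eq_conj_mul_self]
    have h4 := h1.symm.trans h3
    exact_mod_cast h4
  -- the quadratic form
  set Q : (Fin M × Fin N → ℂ) → ℝ := fun w => ∑ i, lam i * Complex.normSq (c w i) with hQdef
  have hQre : ∀ w : Fin M × Fin N → ℂ, (star w ⬝ᵥ A.mulVec w).re = Q w := by
    intro w; rw [hquad w]; exact Complex.ofReal_re _
  have hpure_tr : ∀ (x : Fin M → ℂ) (y : Fin N → ℂ),
      ((A * (outer x ⊗ₖ outer y)).trace).re = Q (fun ij => x ij.1 * y ij.2) := by
    intro x y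
    rw [EW.outer_kron, EW.trace_mul_vecMulVec, hQre]
  -- span lemmas
  have hc_span : ∀ (k : ℕ) (z : Fin M × Fin N → ℂ),
      z ∈ Submodule.span ℂ (v '' {i : Fin (M * N) | (i : ℕ) ≤ k}) →
      ∀ j : Fin (M * N), k < (j : ℕ) → c z j = 0 := by
    intro k z hz j hj
    induction hz using Submodule.span_induction with
    | mem x hx =>
        obtain ⟨i, hi, rfl⟩ := hx
        simp only [Set.mem_setOf_eq] at hi
        have hji : j ≠ i := by rintro rfl; omega
        simp only [hc]
        rw [horth j i, if_neg hji]
    | zero => simp [hc]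
    | add x y hx hy ihx ihy =>
        simp only [hc] at ihx ihy ⊢; rw [dotProduct_add, ihx, ihy, add_zero]
    | smul a x hx ih => simp only [hc] at ih ⊢; rw [dotProduct_smul, ih, smul_zero]
  have hspan_mem : ∀ (k : ℕ) (z : Fin M × Fin N → ℂ),
      (∀ j : Fin (M * N), k < (j : ℕ) → c z j = 0) →
      z ∈ Submodule.span ℂ (v '' {i : Fin (M * N) | (i : ℕ) ≤ k}) := by
    intro k z h
    rw [← hexp z]
    refine Submodule.sum_mem _ fun i _ => ?_
    by_cases hik : (i : ℕ) ≤ k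
    · exact Submodule.smul_mem _ _ (Submodule.subset_span ⟨i, hik, rfl⟩)
    · rw [h i (by omega)]; simp
  -- spectral decomposition as matrices
  have hone : (∑ i, Matrix.vecMulVec (v i) (star (v i)))
      = (1 : Matrix (Fin M × Fin N) (Fin M × Fin N) ℂ) := by
    ext p q
    simp only [Matrix.sum_apply, Matrix.vecMulVec_apply, Pi.star_apply, Matrix.one_apply]
    exact hcomp p q
  have hAspec : A = ∑ i, (lam i : ℂ) • Matrix.vecMulVec (v i) (star (v i)) := by
    calc A = A * 1 := (mul_one A).symm
    _ = ∑ i, A * Matrix.vecMulVec (v i) (star (v i)) := by rw [← hone, Finset.mul_sum]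
    _ = ∑ i, (lam i : ℂ) • Matrix.vecMulVec (v i) (star (v i)) := by
        refine Finset.sum_congr rfl fun i _ => ?_
        rw [EW.mul_vecMulVec, heig i, EW.smul_vecMulVec]
  -- density lower bound
  have hdens : ∀ ρ : Matrix (Fin M × Fin N) (Fin M × Fin N) ℂ, IsDensity ρ →
      lam ⟨0, hn⟩ ≤ ((A * ρ).trace).re := by
    intro ρ hρ
    obtain ⟨hpsd, htr⟩ := hρ
    set r : Fin (M * N) → ℂ := fun i => star (v i) ⬝ᵥ ρ.mulVec (v i) with hr
    have hr0 : ∀ i, 0 ≤ (r i).re ∧ (r i).im = 0 := by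
      intro i
      have := hpsd.dotProduct_mulVec_nonneg (v i)
      rw [Complex.le_def] at this
      exact ⟨this.1, this.2.symm⟩
    have hPtr : ∀ i, (Matrix.vecMulVec (v i) (star (v i)) * ρ).trace = r i := by
      intro i
      rw [Matrix.trace_mul_comm, EW.trace_mul_vecMulVec]
    have htrA : (A * ρ).trace = ∑ i, (lam i : ℂ) * r i := by
      rw [hAspec, Finset.sum_mul, Matrix.trace_sum]
      refine Finset.sum_congr rfl fun i _ => ?_
      rw [Matrix.smul_mul, Matrix.trace_smul, hPtr i, smul_eq_mul]
    have htr1 : ∑ i, (r i).re = 1 := by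
      have h5 : ρ.trace = ∑ i, r i := by
        calc ρ.trace = (1 * ρ).trace := by rw [one_mul]
        _ = ∑ i, r i := by
            rw [← hone, Finset.sum_mul, Matrix.trace_sum]
            exact Finset.sum_congr rfl fun i _ => hPtr i
      have h2 : (ρ.trace).re = (∑ i, r i).re := by rw [h5]
      rw [htr] at h2
      simpa [Complex.re_sum] using h2.symm
    rw [htrA, Complex.re_sum]
    have h3 : ∀ i, ((lam i : ℂ) * r i).re = lam i * (r i).re := by
      intro i
      simp [Complex.mul_re, Complex.ofReal_re, Complex.ofReal_im]
    simp_rw [h3]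
    calc lam ⟨0, hn⟩ = lam ⟨0, hn⟩ * ∑ i, (r i).re := by rw [htr1, mul_one]
    _ = ∑ i, lam ⟨0, hn⟩ * (r i).re := by rw [Finset.mul_sum]
    _ ≤ ∑ i, lam i * (r i).re :=
        Finset.sum_le_sum fun i _ =>
          mul_le_mul_of_nonneg_right (hmono (by simp [Fin.le_def])) (hr0 i).1
  -- the ground state density matrix
  have hρ0tr : ∀ i : Fin (M * N), (Matrix.vecMulVec (v i) (star (v i))).trace = 1 := by
    intro i
    rw [show Matrix.vecMulVec (v i) (star (v i))
        = 1 * Matrix.vecMulVec (v i) (star (v i)) from (one_mul _).symm,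
      EW.trace_mul_vecMulVec, Matrix.one_mulVec, horth]
    simp
  have hρ0A : ((A * Matrix.vecMulVec (v ⟨0, hn⟩) (star (v ⟨0, hn⟩))).trace).re
      = lam ⟨0, hn⟩ := by
    rw [EW.trace_mul_vecMulVec, heig, dotProduct_smul, smul_eq_mul, horth]
    simp
  constructor
  · -- forward direction
    rintro ⟨a, hsep, ρ, hρ, hlt⟩
    have ha0 : lam ⟨0, hn⟩ < a := lt_of_le_of_lt (hdens ρ hρ) hlt
    have hprod : ∀ (x : Fin M → ℂ) (y : Fin N → ℂ), isUnitVec x → isUnitVec y →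
        a ≤ Q (fun ij => x ij.1 * y ij.2) := by
      intro x y hx hy
      have hmem : outer x ⊗ₖ outer y ∈ SepStates M N :=
        subset_convexHull ℝ _ ⟨x, y, hx, hy, rfl⟩
      have h6 := hsep _ hmem
      rwa [hpure_tr] at h6
    -- Q of unit vectors is at most the largest eigenvalue
    have hQle : ∀ w : Fin M × Fin N → ℂ, (∑ p, ‖w p‖ ^ 2) = 1 →
        Q w ≤ lam ⟨M * N - 1, by omega⟩ := by
      intro w hw
      have h7 : ∑ i, Complex.normSq (c w i) = 1 := by rw [hnorm2 w, hw]
      calc Q w ≤ ∑ i, lam ⟨M * N - 1, by omega⟩ * Complex.normSq (c w i) :=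
          Finset.sum_le_sum fun i _ =>
            mul_le_mul_of_nonneg_right
              (hmono (by simpa [Fin.le_def] using Nat.le_sub_one_of_lt i.isLt))
              (Complex.normSq_nonneg _)
      _ = lam ⟨M * N - 1, by omega⟩ := by rw [← Finset.mul_sum, h7, mul_one]
    set F := Finset.univ.filter (fun i : Fin (M * N) => lam i < a) with hF
    have hF0 : (⟨0, hn⟩ : Fin (M * N)) ∈ F := by simp [hF, ha0]
    have hFne : F.Nonempty := ⟨_, hF0⟩
    set kf := F.max' hFne with hkf
    have hkF : kf ∈ F := F.max'_mem hFne
    have hklam : lam kf < a := by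
      have h6 := hkF; simp only [hF, Finset.mem_filter] at h6; exact h6.2
    have hlast : a ≤ lam ⟨M * N - 1, by omega⟩ := by
      have hx := EW.unit_basis M (by omega)
      have hy := EW.unit_basis N (by omega)
      have h8 := hprod _ _ hx hy
      have h9 := hQle _ (EW.prod_unit_norm _ _ hx hy)
      linarith
    have hkne : (kf : ℕ) < M * N - 1 := by
      rcases lt_or_eq_of_le (Nat.le_sub_one_of_lt kf.isLt) with h | h
      · exact h
      · exfalso
        have h10 : kf = (⟨M * N - 1, by omega⟩ : Fin (M * N)) := Fin.ext h
        rw [h10] at hklam; linarith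
    have hk1 : (kf : ℕ) + 1 < M * N := by omega
    refine ⟨(kf : ℕ), hk1, ?_, ?_⟩
    · -- span contains no nonzero product vector
      intro z hz hzprod
      by_contra hzne
      obtain ⟨x, y, rfl⟩ := hzprod
      have hxy : ∃ p : Fin M × Fin N, x p.1 * y p.2 ≠ 0 := by
        by_contra hcon
        push_neg at hcon
        exact hzne (funext fun p => hcon p)
      obtain ⟨p, hp⟩ := hxy
      set sx := ∑ i, ‖x i‖ ^ 2 with hsx
      set sy := ∑ j, ‖y j‖ ^ 2 with hsy
      have hxp : x p.1 ≠ 0 := fun h => hp (by rw [h, zero_mul])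
      have hyp : y p.2 ≠ 0 := fun h => hp (by rw [h, mul_zero])
      have hsxpos : 0 < sx := by
        have h11 : 0 < ‖x p.1‖ ^ 2 := pow_pos (norm_pos_iff.mpr hxp) 2
        have h12 : ‖x p.1‖ ^ 2 ≤ sx :=
          Finset.single_le_sum (f := fun i => ‖x i‖ ^ 2) (fun j _ => by positivity)
            (Finset.mem_univ p.1)
        linarith
      have hsypos : 0 < sy := by
        have h11 : 0 < ‖y p.2‖ ^ 2 := pow_pos (norm_pos_iff.mpr hyp) 2
        have h12 : ‖y p.2‖ ^ 2 ≤ sy :=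
          Finset.single_le_sum (f := fun j => ‖y j‖ ^ 2) (fun j _ => by positivity)
            (Finset.mem_univ p.2)
        linarith
      set x' : Fin M → ℂ := fun i => (((Real.sqrt sx : ℝ) : ℂ))⁻¹ * x i with hx'
      set y' : Fin N → ℂ := fun j => (((Real.sqrt sy : ℝ) : ℂ))⁻¹ * y j with hy'
      have hnormr : ∀ s : ℝ, 0 < s → ‖(((Real.sqrt s : ℝ) : ℂ))⁻¹‖ ^ 2 = s⁻¹ := by
        intro s hs
        rw [norm_inv, Complex.norm_real, Real.norm_eq_abs,
          abs_of_nonneg (Real.sqrt_nonneg _), inv_pow, Real.sq_sqrt hs.le]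
      have hx'unit : isUnitVec x' := by
        show ∑ i, ‖x' i‖ ^ 2 = 1
        have h13 : ∀ i, ‖x' i‖ ^ 2 = sx⁻¹ * ‖x i‖ ^ 2 := by
          intro i
          rw [hx']
          rw [norm_mul, mul_pow, hnormr sx hsxpos]
        simp_rw [h13]
        rw [← Finset.mul_sum, ← hsx, inv_mul_cancel₀ (ne_of_gt hsxpos)]
      have hy'unit : isUnitVec y' := by
        show ∑ j, ‖y' j‖ ^ 2 = 1
        have h13 : ∀ j, ‖y' j‖ ^ 2 = sy⁻¹ * ‖y j‖ ^ 2 := by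
          intro j
          rw [hy']
          rw [norm_mul, mul_pow, hnormr sy hsypos]
        simp_rw [h13]
        rw [← Finset.mul_sum, ← hsy, inv_mul_cancel₀ (ne_of_gt hsypos)]
      set z' : Fin M × Fin N → ℂ := fun ij => x' ij.1 * y' ij.2 with hz'
      have hz'smul : z' = ((((Real.sqrt sx : ℝ) : ℂ))⁻¹ * (((Real.sqrt sy : ℝ) : ℂ))⁻¹) •
          (fun ij : Fin M × Fin N => x ij.1 * y ij.2) := by
        funext ij
        simp only [hz', hx', hy', Pi.smul_apply, smul_eq_mul]
        ring
      have hz'mem : z' ∈ Submodule.span ℂ (v '' {i : Fin (M * N) | (i : ℕ) ≤ (kf : ℕ)}) := by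
        rw [hz'smul]
        exact Submodule.smul_mem _ _ hz
      have hc0 : ∀ j : Fin (M * N), (kf : ℕ) < (j : ℕ) → c z' j = 0 :=
        hc_span (kf : ℕ) z' hz'mem
      have h10 : a ≤ Q z' := hprod x' y' hx'unit hy'unit
      have hz'norm : ∑ i, Complex.normSq (c z' i) = 1 := by
        rw [hnorm2 z']
        exact EW.prod_unit_norm x' y' hx'unit hy'unit
      have hstep : Q z' ≤ ∑ i, lam kf * Complex.normSq (c z' i) := by
        refine Finset.sum_le_sum fun i _ => ?_
        by_cases hik : (i : ℕ) ≤ (kf : ℕ)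
        · exact mul_le_mul_of_nonneg_right (hmono (by simp [Fin.le_def, hik]))
            (Complex.normSq_nonneg _)
        · rw [hc0 i (by omega)]
          simp
      have hstep2 : (∑ i, lam kf * Complex.normSq (c z' i)) = lam kf := by
        rw [← Finset.mul_sum, hz'norm, mul_one]
      linarith
    · -- the spectral gap
      have h12 : (⟨(kf : ℕ) + 1, hk1⟩ : Fin (M * N)) ∉ F := by
        intro hmem
        have h13 := F.le_max' _ hmem
        rw [Fin.le_def] at h13
        simp only [Fin.val_mk] at h13
        omega
      have h13 : a ≤ lam ⟨(kf : ℕ) + 1, hk1⟩ := by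
        by_contra hcon
        push_neg at hcon
        exact h12 (by simp [hF, hcon])
      exact lt_of_le_of_lt (le_of_eq (congrArg lam (Fin.ext rfl)))
        (lt_of_lt_of_le hklam h13)
  · rintro ⟨k, hk, hspan, hgap⟩
    have hKc : IsCompact (({x | isUnitVec x} : Set (Fin M → ℂ)) ×ˢ
        ({y | isUnitVec y} : Set (Fin N → ℂ))) :=
      (EW.isUnitVec_sphere_compact M).prod (EW.isUnitVec_sphere_compact N)
    have hKne : (({x | isUnitVec x} : Set (Fin M → ℂ)) ×ˢ
        ({y | isUnitVec y} : Set (Fin N → ℂ))).Nonempty :=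
      ⟨(fun i => if i = ⟨0, by omega⟩ then 1 else 0,
        fun j => if j = ⟨0, by omega⟩ then 1 else 0),
        EW.unit_basis M (by omega), EW.unit_basis N (by omega)⟩
    have hcont : Continuous (fun p : (Fin M → ℂ) × (Fin N → ℂ) =>
        Q (fun ij => p.1 ij.1 * p.2 ij.2)) := by
      show Continuous (fun p : (Fin M → ℂ) × (Fin N → ℂ) =>
        ∑ i, lam i * Complex.normSq (∑ q, star (v i q) * (p.1 q.1 * p.2 q.2)))
      apply continuous_finset_sum
      intro i _
      apply Continuous.mul continuous_const
      apply Complex.continuous_normSq.comp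
      apply continuous_finset_sum
      intro q _
      exact continuous_const.mul (((continuous_apply q.1).comp continuous_fst).mul
        ((continuous_apply q.2).comp continuous_snd))
    obtain ⟨p0, hp0K, hp0min⟩ := hKc.exists_isMinOn hKne hcont.continuousOn
    obtain ⟨hp01, hp02⟩ := hp0K
    set z0 : Fin M × Fin N → ℂ := fun ij => p0.1 ij.1 * p0.2 ij.2 with hz0
    have hlow : ∀ σ ∈ SepStates M N, Q z0 ≤ ((A * σ).trace).re := by
      apply EW.sep_lower
      rintro σ ⟨x, y, hx, hy, rfl⟩
      rw [hpure_tr]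
      have h16 := isMinOn_iff.mp hp0min (x, y) (Set.mem_prod.mpr ⟨hx, hy⟩)
      exact h16
    have hz0norm : ∑ i, Complex.normSq (c z0 i) = 1 := by
      rw [hnorm2 z0]; exact EW.prod_unit_norm _ _ hp01 hp02
    set F2 := Finset.univ.filter (fun i : Fin (M * N) => k < (i : ℕ)) with hF2
    set G2 := Finset.univ.filter (fun i : Fin (M * N) => ¬ k < (i : ℕ)) with hG2
    set s := ∑ i ∈ F2, Complex.normSq (c z0 i) with hs
    have hssplit : s + (∑ i ∈ G2, Complex.normSq (c z0 i)) = 1 := by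
      rw [hs, hF2, hG2, Finset.sum_filter_add_sum_filter_not, hz0norm]
    have hspos : 0 < s := by
      rcases (Finset.sum_nonneg (fun i (_ : i ∈ F2) =>
        Complex.normSq_nonneg (c z0 i))).lt_or_eq with h | h
      · exact h
      · exfalso
        have hzero : ∀ j : Fin (M * N), k < (j : ℕ) → c z0 j = 0 := by
          intro j hj
          have hmem : j ∈ F2 := by simp [hF2, hj]
          have h15 := (Finset.sum_eq_zero_iff_of_nonneg
            (fun i (_ : i ∈ F2) => Complex.normSq_nonneg (c z0 i))).mp h.symm j hmem
          exact Complex.normSq_eq_zero.mp h15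
        have hz0mem := hspan_mem k z0 hzero
        have hz00 : z0 = 0 := hspan z0 hz0mem ⟨p0.1, p0.2, rfl⟩
        rw [hz00] at hz0norm
        simp only [hc, dotProduct_zero, Complex.normSq_zero, Finset.sum_const_zero] at hz0norm
        exact zero_ne_one hz0norm
    have hksucc : lam ⟨0, hn⟩ < lam ⟨k + 1, hk⟩ := by
      have h1 : lam ⟨0, hn⟩ ≤ lam ⟨k, by omega⟩ := hmono (by simp [Fin.le_def])
      linarith
    have hsplitQ : (∑ i ∈ F2, lam i * Complex.normSq (c z0 i))
        + (∑ i ∈ G2, lam i * Complex.normSq (c z0 i)) = Q z0 := by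
      rw [hQdef, hF2, hG2, Finset.sum_filter_add_sum_filter_not]
    have hb1 : lam ⟨k + 1, hk⟩ * s ≤ ∑ i ∈ F2, lam i * Complex.normSq (c z0 i) := by
      rw [hs, Finset.mul_sum]
      refine Finset.sum_le_sum fun i hi => ?_
      have hik : k < (i : ℕ) := by
        rw [hF2, Finset.mem_filter] at hi; exact hi.2
      exact mul_le_mul_of_nonneg_right (hmono (by simp only [Fin.le_def]; omega))
        (Complex.normSq_nonneg _)
    have hb2 : lam ⟨0, hn⟩ * (∑ i ∈ G2, Complex.normSq (c z0 i))
        ≤ ∑ i ∈ G2, lam i * Complex.normSq (c z0 i) := by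
      rw [Finset.mul_sum]
      refine Finset.sum_le_sum fun i _ => ?_
      exact mul_le_mul_of_nonneg_right (hmono (by simp [Fin.le_def]))
        (Complex.normSq_nonneg _)
    have hQz0 : lam ⟨0, hn⟩ < Q z0 := by
      have hmul := mul_pos (sub_pos.mpr hksucc) hspos
      have hlink : lam ⟨0, hn⟩ * s + lam ⟨0, hn⟩ * (∑ i ∈ G2, Complex.normSq (c z0 i))
          = lam ⟨0, hn⟩ := by rw [← mul_add, hssplit, mul_one]
      have hmul' : lam ⟨0, hn⟩ * s < lam ⟨k + 1, hk⟩ * s := by nlinarith [hmul]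
      linarith
    exact ⟨Q z0, hlow, Matrix.vecMulVec (v ⟨0, hn⟩) (star (v ⟨0, hn⟩)),
      ⟨EW.vecMulVec_posSemidef _, hρ0tr _⟩, by rw [hρ0A]; exact hQz0⟩

end
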